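/- arXiv:2307.06437 — 5 statements merged into one kernel-verified Lean document; each statement's English description precedes it below -/
import Mathlib

section
/- Let G be a subgroup of A × B × C, let S_AC = {(a,1,c) ∈ G} and S_BC = {(1,b,c) ∈ G}, and let N = S_AC · S_BC. Then N is normal in G, and writing G_A = π_A(G), N_A = π_A(N), G_B = π_B(G), N_B = π_B(N), the quotient groups G_A/N_A and G_B/N_B are isomorphic. -/
/-- Projection of `A × B × C` onto `A`. -/
def projA (A B C : Type*) [Group A] [Group B] [Group C] : A × B × C →* A :=
  MonoidHom.fst A (B × C)

/-- Projection of `A × B × C` onto `B`. -/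
def projB (A B C : Type*) [Group A] [Group B] [Group C] : A × B × C →* B :=
  (MonoidHom.fst B C).comp (MonoidHom.snd A (B × C))

/-- Theorem 1 of the paper: with `N = S_AC · S_BC`, `N ◁ G` and
`G_A/N_A ≅ G_B/N_B` where `G_X = π_X(G)`, `N_X = π_X(N)`. -/
theorem stmt2 {A B C : Type*} [Group A] [Group B] [Group C]
    (G SAC SBC N : Subgroup (A × B × C))
    (hSAC : ∀ g : A × B × C, g ∈ SAC ↔ g ∈ G ∧ g.2.1 = 1)
    (hSBC : ∀ g : A × B × C, g ∈ SBC ↔ g ∈ G ∧ g.1 = 1)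
    (hN : ∀ g : A × B × C, g ∈ N ↔ ∃ x ∈ SAC, ∃ y ∈ SBC, g = x * y)
    [((N.map (projA A B C)).subgroupOf (G.map (projA A B C))).Normal]
    [((N.map (projB A B C)).subgroupOf (G.map (projB A B C))).Normal] :
    (∀ g ∈ G, ∀ n ∈ N, g * n * g⁻¹ ∈ N) ∧
    Nonempty
      ((↥(G.map (projA A B C)) ⧸ (N.map (projA A B C)).subgroupOf (G.map (projA A B C))) ≃*
       (↥(G.map (projB A B C)) ⧸ (N.map (projB A B C)).subgroupOf (G.map (projB A B C)))) := by
  have hSACG : ∀ x ∈ SAC, x ∈ G := fun x hx => ((hSAC x).mp hx).1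
  have hSBCG : ∀ x ∈ SBC, x ∈ G := fun x hx => ((hSBC x).mp hx).1
  have hSACN : ∀ x ∈ SAC, x ∈ N := fun x hx =>
    (hN x).mpr ⟨x, hx, 1, (hSBC 1).mpr ⟨G.one_mem, rfl⟩, (mul_one x).symm⟩
  have hSBCN : ∀ y ∈ SBC, y ∈ N := fun y hy =>
    (hN y).mpr ⟨1, (hSAC 1).mpr ⟨G.one_mem, rfl⟩, y, hy, (one_mul y).symm⟩
  have hNG : ∀ n ∈ N, n ∈ G := by
    intro n hn
    obtain ⟨x, hx, y, hy, rfl⟩ := (hN n).mp hn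
    exact G.mul_mem (hSACG x hx) (hSBCG y hy)
  have hnormal : ∀ g ∈ G, ∀ n ∈ N, g * n * g⁻¹ ∈ N := by
    intro g hg n hn
    obtain ⟨x, hx, y, hy, rfl⟩ := (hN n).mp hn
    refine (hN _).mpr ⟨g * x * g⁻¹, ?_, g * y * g⁻¹, ?_, by group⟩
    · refine (hSAC _).mpr ⟨G.mul_mem (G.mul_mem hg (hSACG x hx)) (G.inv_mem hg), ?_⟩
      have h1 := ((hSAC x).mp hx).2
      simp [Prod.mul_def, h1]
    · refine (hSBC _).mpr ⟨G.mul_mem (G.mul_mem hg (hSBCG y hy)) (G.inv_mem hg), ?_⟩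
      have h1 := ((hSBC y).mp hy).2
      simp [Prod.mul_def, h1]
  refine ⟨hnormal, ?_⟩
  -- key characterizations
  have keyA : ∀ g : A × B × C, g ∈ G → ((projA A B C) g ∈ N.map (projA A B C) ↔ g ∈ N) := by
    intro g hg
    constructor
    · rintro ⟨n, hn, h1⟩
      have hgn : g * n⁻¹ ∈ SBC := by
        refine (hSBC _).mpr ⟨G.mul_mem hg (G.inv_mem (hNG n hn)), ?_⟩
        have : n.1 = g.1 := h1
        simp [Prod.mul_def, ← this]
      have : g = (g * n⁻¹) * n := by group
      rw [this]
      exact N.mul_mem (hSBCN _ hgn) hn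
    · intro h; exact ⟨g, h, rfl⟩
  have keyB : ∀ g : A × B × C, g ∈ G → ((projB A B C) g ∈ N.map (projB A B C) ↔ g ∈ N) := by
    intro g hg
    constructor
    · rintro ⟨n, hn, h1⟩
      have hgn : g * n⁻¹ ∈ SAC := by
        refine (hSAC _).mpr ⟨G.mul_mem hg (G.inv_mem (hNG n hn)), ?_⟩
        have : n.2.1 = g.2.1 := h1
        simp [Prod.mul_def, ← this]
      have : g = (g * n⁻¹) * n := by group
      rw [this]
      exact N.mul_mem (hSACN _ hgn) hn
    · intro h; exact ⟨g, h, rfl⟩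
  -- maps from G to the two quotients
  set GA := G.map (projA A B C) with hGA
  set GB := G.map (projB A B C) with hGB
  set NA := (N.map (projA A B C)).subgroupOf GA with hNA
  set NB := (N.map (projB A B C)).subgroupOf GB with hNB
  have fAmem : ∀ g : ↥G, (projA A B C) (g : A × B × C) ∈ GA :=
    fun g => ⟨(g : A × B × C), g.2, rfl⟩
  have fBmem : ∀ g : ↥G, (projB A B C) (g : A × B × C) ∈ GB :=
    fun g => ⟨(g : A × B × C), g.2, rfl⟩
  set fA : ↥G →* ↥GA := ((projA A B C).comp G.subtype).codRestrict GA fAmem with hfA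
  set fB : ↥G →* ↥GB := ((projB A B C).comp G.subtype).codRestrict GB fBmem with hfB
  set pA : ↥G →* ↥GA ⧸ NA := (QuotientGroup.mk' NA).comp fA with hpAdef
  set pB : ↥G →* ↥GB ⧸ NB := (QuotientGroup.mk' NB).comp fB with hpBdef
  have hpA : Function.Surjective pA := by
    rintro q
    obtain ⟨x, rfl⟩ := QuotientGroup.mk_surjective q
    obtain ⟨a, g, hg, rfl⟩ := x
    exact ⟨⟨g, hg⟩, rfl⟩
  have hpB : Function.Surjective pB := by
    rintro q
    obtain ⟨x, rfl⟩ := QuotientGroup.mk_surjective q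
    obtain ⟨b, g, hg, rfl⟩ := x
    exact ⟨⟨g, hg⟩, rfl⟩
  have hA : ∀ g : ↥G, (g ∈ pA.ker ↔ (g : A × B × C) ∈ N) := by
    intro g
    rw [MonoidHom.mem_ker, hpAdef, MonoidHom.comp_apply, QuotientGroup.mk'_apply,
      QuotientGroup.eq_one_iff, hNA, Subgroup.mem_subgroupOf]
    exact keyA _ g.2
  have hB : ∀ g : ↥G, (g ∈ pB.ker ↔ (g : A × B × C) ∈ N) := by
    intro g
    rw [MonoidHom.mem_ker, hpBdef, MonoidHom.comp_apply, QuotientGroup.mk'_apply,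
      QuotientGroup.eq_one_iff, hNB, Subgroup.mem_subgroupOf]
    exact keyB _ g.2
  have hker : pA.ker = pB.ker := by
    ext g
    rw [hA, hB]
  exact ⟨(QuotientGroup.quotientKerEquivOfSurjective pA hpA).symm.trans
    ((QuotientGroup.quotientMulEquivOfEq hker).trans
      (QuotientGroup.quotientKerEquivOfSurjective pB hpB))⟩
end

section
/- Let G be a subgroup of A × B × C and let N = S_AB · S_AC · S_BC where S_AB = {(a,b,1) ∈ G}, S_AC = {(a,1,c) ∈ G}, S_BC = {(1,b,c) ∈ G}. Then N ◁ G and there are isomorphisms G/N ≅ G_A/N_A ≅ G_B/N_B ≅ G_C/N_C, where G_X = π_X(G) and N_X = π_X(N) for X ∈ {A,B,C}. -/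
/-- Projection of `A × B × C` onto `C`. -/
def projC (A B C : Type*) [Group A] [Group B] [Group C] : A × B × C →* C :=
  (MonoidHom.snd B C).comp (MonoidHom.snd A (B × C))

/-- General helper: if membership in `N` is detected by `f` among elements of `G`,
then `G/N ≃ f(G)/f(N)`. -/
lemma quot_equiv_of_proj {X Y : Type*} [Group X] [Group Y] (f : X →* Y)
    (G N : Subgroup X) [(N.subgroupOf G).Normal]
    [((N.map f).subgroupOf (G.map f)).Normal]
    (hNG : N ≤ G)
    (hker : ∀ g ∈ G, f g ∈ N.map f → g ∈ N) :
    Nonempty ((↥G ⧸ N.subgroupOf G) ≃* (↥(G.map f) ⧸ (N.map f).subgroupOf (G.map f))) := by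
  set φ := (QuotientGroup.mk' ((N.map f).subgroupOf (G.map f))).comp (f.subgroupMap G) with hφ
  have hsurj : Function.Surjective φ :=
    (QuotientGroup.mk'_surjective _).comp (f.subgroupMap_surjective G)
  have hkerφ : φ.ker = N.subgroupOf G := by
    ext g
    simp only [hφ, MonoidHom.mem_ker, MonoidHom.comp_apply, ← QuotientGroup.mk'_apply,
      QuotientGroup.mk'_apply, QuotientGroup.eq_one_iff, Subgroup.mem_subgroupOf]
    constructor
    · intro h
      exact hker g g.2 h
    · intro h
      exact ⟨g, h, rfl⟩
  exact ⟨(QuotientGroup.quotientMulEquivOfEq hkerφ.symm).trans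
    (QuotientGroup.quotientKerEquivOfSurjective φ hsurj)⟩

/-- Theorem 2 of the paper: with `N = S_AB · S_AC · S_BC`,
`N ◁ G` and `G/N ≅ G_A/N_A ≅ G_B/N_B ≅ G_C/N_C`. -/
theorem stmt3 {A B C : Type*} [Group A] [Group B] [Group C]
    (G SAB SAC SBC N : Subgroup (A × B × C))
    (hSAB : ∀ g : A × B × C, g ∈ SAB ↔ g ∈ G ∧ g.2.2 = 1)
    (hSAC : ∀ g : A × B × C, g ∈ SAC ↔ g ∈ G ∧ g.2.1 = 1)
    (hSBC : ∀ g : A × B × C, g ∈ SBC ↔ g ∈ G ∧ g.1 = 1)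
    (hN : ∀ g : A × B × C, g ∈ N ↔ ∃ x ∈ SAB, ∃ y ∈ SAC, ∃ z ∈ SBC, g = x * y * z)
    [(N.subgroupOf G).Normal]
    [((N.map (projA A B C)).subgroupOf (G.map (projA A B C))).Normal]
    [((N.map (projB A B C)).subgroupOf (G.map (projB A B C))).Normal]
    [((N.map (projC A B C)).subgroupOf (G.map (projC A B C))).Normal] :
    (∀ g ∈ G, ∀ n ∈ N, g * n * g⁻¹ ∈ N) ∧
    Nonempty ((↥G ⧸ N.subgroupOf G) ≃*
      (↥(G.map (projA A B C)) ⧸ (N.map (projA A B C)).subgroupOf (G.map (projA A B C)))) ∧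
    Nonempty
      ((↥(G.map (projA A B C)) ⧸ (N.map (projA A B C)).subgroupOf (G.map (projA A B C))) ≃*
       (↥(G.map (projB A B C)) ⧸ (N.map (projB A B C)).subgroupOf (G.map (projB A B C)))) ∧
    Nonempty
      ((↥(G.map (projB A B C)) ⧸ (N.map (projB A B C)).subgroupOf (G.map (projB A B C))) ≃*
       (↥(G.map (projC A B C)) ⧸ (N.map (projC A B C)).subgroupOf (G.map (projC A B C)))) := by
  have hSABG : SAB ≤ G := fun x hx => ((hSAB x).1 hx).1
  have hSACG : SAC ≤ G := fun x hx => ((hSAC x).1 hx).1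
  have hSBCG : SBC ≤ G := fun x hx => ((hSBC x).1 hx).1
  have hNG : N ≤ G := by
    intro g hg
    obtain ⟨x, hx, y, hy, z, hz, rfl⟩ := (hN g).1 hg
    exact mul_mem (mul_mem (hSABG hx) (hSACG hy)) (hSBCG hz)
  have hSABN : SAB ≤ N := fun x hx =>
    (hN x).2 ⟨x, hx, 1, (hSAC 1).2 ⟨one_mem G, rfl⟩, 1, (hSBC 1).2 ⟨one_mem G, rfl⟩, by group⟩
  have hSACN : SAC ≤ N := fun y hy =>
    (hN y).2 ⟨1, (hSAB 1).2 ⟨one_mem G, rfl⟩, y, hy, 1, (hSBC 1).2 ⟨one_mem G, rfl⟩, by group⟩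
  have hSBCN : SBC ≤ N := fun z hz =>
    (hN z).2 ⟨1, (hSAB 1).2 ⟨one_mem G, rfl⟩, 1, (hSAC 1).2 ⟨one_mem G, rfl⟩, z, hz, by group⟩
  have hnormal : ∀ g ∈ G, ∀ n ∈ N, g * n * g⁻¹ ∈ N := by
    intro g hg n hn
    obtain ⟨x, hx, y, hy, z, hz, rfl⟩ := (hN n).1 hn
    have hx' : g * x * g⁻¹ ∈ SAB := (hSAB _).2
      ⟨mul_mem (mul_mem hg (hSABG hx)) (inv_mem hg), by
        simp [Prod.snd_mul, Prod.snd_inv, ((hSAB x).1 hx).2]⟩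
    have hy' : g * y * g⁻¹ ∈ SAC := (hSAC _).2
      ⟨mul_mem (mul_mem hg (hSACG hy)) (inv_mem hg), by
        simp [Prod.snd_mul, Prod.snd_inv, ((hSAC y).1 hy).2]⟩
    have hz' : g * z * g⁻¹ ∈ SBC := (hSBC _).2
      ⟨mul_mem (mul_mem hg (hSBCG hz)) (inv_mem hg), by
        simp [Prod.fst_mul, Prod.fst_inv, ((hSBC z).1 hz).2]⟩
    exact (hN _).2 ⟨_, hx', _, hy', _, hz', by group⟩
  -- key detection lemmas
  have keyA : ∀ g ∈ G, projA A B C g ∈ N.map (projA A B C) → g ∈ N := by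
    intro g hg hgm
    obtain ⟨m, hm, hme⟩ := hgm
    have h1 : g * m⁻¹ ∈ SBC := (hSBC _).2
      ⟨mul_mem hg (inv_mem (hNG hm)), by
        have : m.1 = g.1 := hme
        simp [Prod.fst_mul, Prod.fst_inv, ← this]⟩
    have : g = (g * m⁻¹) * m := by group
    rw [this]
    exact mul_mem (hSBCN h1) hm
  have keyB : ∀ g ∈ G, projB A B C g ∈ N.map (projB A B C) → g ∈ N := by
    intro g hg hgm
    obtain ⟨m, hm, hme⟩ := hgm
    have h1 : g * m⁻¹ ∈ SAC := (hSAC _).2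
      ⟨mul_mem hg (inv_mem (hNG hm)), by
        have : m.2.1 = g.2.1 := hme
        simp [Prod.snd_mul, Prod.snd_inv, Prod.fst_mul, ← this]⟩
    have : g = (g * m⁻¹) * m := by group
    rw [this]
    exact mul_mem (hSACN h1) hm
  have keyC : ∀ g ∈ G, projC A B C g ∈ N.map (projC A B C) → g ∈ N := by
    intro g hg hgm
    obtain ⟨m, hm, hme⟩ := hgm
    have h1 : g * m⁻¹ ∈ SAB := (hSAB _).2
      ⟨mul_mem hg (inv_mem (hNG hm)), by
        have : m.2.2 = g.2.2 := hme
        simp [Prod.snd_mul, Prod.snd_inv, ← this]⟩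
    have : g = (g * m⁻¹) * m := by group
    rw [this]
    exact mul_mem (hSABN h1) hm
  obtain ⟨eA⟩ := quot_equiv_of_proj (projA A B C) G N hNG keyA
  obtain ⟨eB⟩ := quot_equiv_of_proj (projB A B C) G N hNG keyB
  obtain ⟨eC⟩ := quot_equiv_of_proj (projC A B C) G N hNG keyC
  exact ⟨hnormal, ⟨eA⟩, ⟨eA.symm.trans eB⟩, ⟨eB.symm.trans eC⟩⟩
end

section
/- Let G be a subgroup of A × B × C and let Q = G/(S_A × S_B × S_C) where S_A, S_B, S_C are the one-component subgroups of G. Then the images E_AB and E_AC of S_AB and S_AC in Q commute element-by-element: for all e ∈ E_AB and f ∈ E_AC, ef = fe. -/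
/-- in the quotient `Q = G/(S_A × S_B × S_C)`, the images `E_AB`
and `E_AC` of the two-party stabilizers `S_AB` and `S_AC` commute
element-by-element. -/
theorem stmt8 {A B C : Type*} [Group A] [Group B] [Group C]
    (G N : Subgroup (A × B × C))
    (hN : ∀ g : A × B × C, g ∈ N ↔
      (g.1, (1 : B), (1 : C)) ∈ G ∧ ((1 : A), g.2.1, (1 : C)) ∈ G ∧
        ((1 : A), (1 : B), g.2.2) ∈ G)
    [(N.subgroupOf G).Normal] :
    ∀ (s t : A × B × C) (hs : s ∈ G) (ht : t ∈ G), s.2.2 = 1 → t.2.1 = 1 →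
      QuotientGroup.mk' (N.subgroupOf G) ⟨s, hs⟩ *
          QuotientGroup.mk' (N.subgroupOf G) ⟨t, ht⟩ =
        QuotientGroup.mk' (N.subgroupOf G) ⟨t, ht⟩ *
          QuotientGroup.mk' (N.subgroupOf G) ⟨s, hs⟩ := by
  intro s t hs ht hs3 ht2
  rw [← map_mul, ← map_mul]
  apply (QuotientGroup.eq ..).mpr
  rw [Subgroup.mem_subgroupOf]
  have hmem : (t⁻¹ * s⁻¹ * (t * s) : A × B × C) ∈ G := by
    exact mul_mem (mul_mem (inv_mem ht) (inv_mem hs)) (mul_mem ht hs)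
  have h2 : (t⁻¹ * s⁻¹ * (t * s)).2.1 = 1 := by
    simp [Prod.snd_mul, Prod.fst_mul, ht2]
  have h3 : (t⁻¹ * s⁻¹ * (t * s)).2.2 = 1 := by
    simp [Prod.snd_mul, hs3]
  have : (((((⟨s, hs⟩ : G) * ⟨t, ht⟩)⁻¹ * ((⟨t, ht⟩ : G) * ⟨s, hs⟩)) : G) : A × B × C)
      = t⁻¹ * s⁻¹ * (t * s) := by
    push_cast
    simp [mul_assoc]
  rw [this, hN]
  refine ⟨?_, by rw [h2]; exact G.one_mem, by rw [h3]; exact G.one_mem⟩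
  have heq : ((t⁻¹ * s⁻¹ * (t * s)).1, (1 : B), (1 : C)) = t⁻¹ * s⁻¹ * (t * s) :=
    Prod.ext rfl (Prod.ext h2.symm h3.symm)
  rw [heq]; exact hmem
end

section
/- Let G be a subgroup of A × B × C and suppose that for every g = (g_A, g_B, g_C) ∈ G there exists an element of the form (g_A, b, 1) ∈ G for some b ∈ B (i.e. π_A(S_AB) = π_A(G) where S_AB = {(a,b,1) ∈ G}). Then G = S_AB · S_BC, where S_BC = {(1,b,c) ∈ G}. Consequently the quotient G/(S_AB · S_AC · S_BC) is trivial. -/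
/-- if every first component of `G` is realized by an element of
`S_AB`, then `G = S_AB · S_BC` and hence `G ≤ N = S_AB · S_AC · S_BC`, i.e. the
quotient `G/N` is trivial. -/
theorem stmt11 {A B C : Type*} [Group A] [Group B] [Group C]
    (G N : Subgroup (A × B × C))
    (hsat : ∀ g ∈ G, ∃ b : B, ((g : A × B × C).1, b, (1 : C)) ∈ G)
    (hN : ∀ g : A × B × C, g ∈ N ↔
      ∃ x ∈ G, ∃ y ∈ G, ∃ z ∈ G, x.2.2 = 1 ∧ y.2.1 = 1 ∧ z.1 = 1 ∧ g = x * y * z) :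
    (∀ g ∈ G, ∃ x ∈ G, ∃ y ∈ G, x.2.2 = 1 ∧ y.1 = 1 ∧ g = x * y) ∧ G ≤ N := by
  have key : ∀ g ∈ G, ∃ x ∈ G, ∃ y ∈ G, x.2.2 = 1 ∧ y.1 = 1 ∧ g = x * y := by
    intro g hg
    obtain ⟨b, hb⟩ := hsat g hg
    refine ⟨(g.1, b, 1), hb, (g.1, b, 1)⁻¹ * g, G.mul_mem (G.inv_mem hb) hg, rfl, ?_, ?_⟩
    · simp
    · group
  refine ⟨key, fun g hg => ?_⟩
  obtain ⟨x, hx, y, hy, hx2, hy1, hxy⟩ := key g hg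
  exact (hN g).mpr ⟨x, hx, 1, G.one_mem, y, hy, hx2, rfl, hy1, by simp [hxy]⟩
end

section
/- Let |ψ⟩ = a|00⟩ + b|11⟩ be a two-qubit state with a > b > 0 and a² + b² = 1. Then a pair of unitary 2×2 matrices (u, v) satisfies (u ⊗ v)|ψ⟩ = e^{iθ}|ψ⟩ for some phase θ if and only if u and v are diagonal with u = e^{iθ₁} diag(e^{iα₁}, e^{iα₂}) and v = e^{iθ₂} diag(e^{-iα₁}, e^{-iα₂}) for some real θ₁, θ₂, α₁, α₂ with θ₁ + θ₂ = θ (mod 2π). -/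
open Matrix

/-- The two-qubit state `a|00⟩ + b|11⟩`. -/
noncomputable def twoQubitState (a b : ℝ) : Fin 2 × Fin 2 → ℂ := fun p =>
  if p = (0, 0) then (a : ℂ) else if p = (1, 1) then (b : ℂ) else 0

/-- A diagonal phase matrix `e^{iθ} diag(e^{iα₁}, e^{iα₂})`. -/
noncomputable def phaseDiag (θ α₁ α₂ : ℝ) : Matrix (Fin 2) (Fin 2) ℂ :=
  Complex.exp (θ * Complex.I) •
    !![Complex.exp (α₁ * Complex.I), 0; 0, Complex.exp (α₂ * Complex.I)]

/-- for `|ψ⟩ = a|00⟩ + b|11⟩` with `a > b > 0`, `a² + b² = 1`,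
a pair of unitaries `(u,v)` stabilizes `|ψ⟩` up to the phase `e^{iθ}` iff
`u = e^{iθ₁} diag(e^{iα₁}, e^{iα₂})`, `v = e^{iθ₂} diag(e^{-iα₁}, e^{-iα₂})`
with `θ₁ + θ₂ = θ (mod 2π)`. -/
theorem stmt13 (a b : ℝ) (hba : b < a) (hb : 0 < b) (hnorm : a ^ 2 + b ^ 2 = 1)
    (u v : Matrix (Fin 2) (Fin 2) ℂ)
    (hu : u ∈ Matrix.unitaryGroup (Fin 2) ℂ)
    (hv : v ∈ Matrix.unitaryGroup (Fin 2) ℂ) (θ : ℝ) :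
    (Matrix.kroneckerMap (· * ·) u v).mulVec (twoQubitState a b) =
        Complex.exp (θ * Complex.I) • twoQubitState a b ↔
      ∃ θ₁ θ₂ α₁ α₂ : ℝ,
        u = phaseDiag θ₁ α₁ α₂ ∧ v = phaseDiag θ₂ (-α₁) (-α₂) ∧
        Complex.exp ((θ₁ + θ₂) * Complex.I) = Complex.exp (θ * Complex.I) := by
  have ha : (0:ℝ) < a := lt_trans hb hba
  constructor
  · intro h
    -- extract scalar equations
    have E00 := congrFun h (0, 0)
    have E01 := congrFun h (0, 1)
    have E10 := congrFun h (1, 0)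
    have E11 := congrFun h (1, 1)
    simp [mulVec, dotProduct, Fintype.sum_prod_type, Fin.sum_univ_two, twoQubitState,
      kroneckerMap, Prod.ext_iff] at E00 E01 E10 E11
    -- matrix form
    set M : Matrix (Fin 2) (Fin 2) ℂ := !![(a:ℂ), 0; 0, (b:ℂ)] with hMdef
    have hM : u * M * vᵀ = Complex.exp (θ * Complex.I) • M := by
      ext i j
      fin_cases i <;> fin_cases j <;>
        simp [hMdef, mul_apply, Fin.sum_univ_two]
      · linear_combination E00
      · linear_combination E01
      · linear_combination E10
      · linear_combination E11
    have hvt : vᵀ * star vᵀ = 1 := by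
      have h1 : star v * v = 1 := hv.1
      have : star vᵀ = (star v)ᵀ := by
        ext i j
        simp [Matrix.star_eq_conjTranspose, Matrix.conjTranspose_apply]
      rw [this, ← Matrix.transpose_mul, h1, Matrix.transpose_one]
    have hee : Complex.exp (θ * Complex.I) * star (Complex.exp (θ * Complex.I)) = 1 := by
      rw [RCLike.star_def, ← Complex.exp_conj]
      rw [← Complex.exp_add]
      simp
    have h1 : (u * M * vᵀ) * star (u * M * vᵀ) = u * (M * star M) * star u := by
      rw [Matrix.star_mul, Matrix.star_mul]
      simp only [Matrix.mul_assoc]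
      rw [← Matrix.mul_assoc vᵀ, hvt, Matrix.one_mul]
    have h2 : u * (M * star M) * star u = M * star M := by
      rw [← h1, hM, star_smul, Matrix.smul_mul, Matrix.mul_smul, smul_smul, hee, one_smul]
    have h3 : u * (M * star M) = (M * star M) * u := by
      calc u * (M * star M) = u * (M * star M) * 1 := by rw [Matrix.mul_one]
        _ = u * (M * star M) * (star u * u) := by rw [hu.1]
        _ = (u * (M * star M) * star u) * u := by simp only [Matrix.mul_assoc]
        _ = (M * star M) * u := by rw [h2]
    have hab2 : (a:ℂ)^2 ≠ (b:ℂ)^2 := by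
      intro hEq
      have : (a:ℝ)^2 = b^2 := by exact_mod_cast hEq
      nlinarith
    have hMstar : star M = M := by
      ext i j
      fin_cases i <;> fin_cases j <;>
        simp [hMdef, Matrix.star_eq_conjTranspose, Matrix.conjTranspose_apply]
    rw [hMstar] at h3
    have h01 := congrFun (congrFun h3 0) 1
    have h10 := congrFun (congrFun h3 1) 0
    simp [hMdef, mul_apply, Fin.sum_univ_two] at h01 h10
    have hu01 : u 0 1 = 0 := by
      rcases mul_eq_zero.mp (show ((b:ℂ)^2 - (a:ℂ)^2) * u 0 1 = 0 by linear_combination h01)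
        with h' | h'
      · exact absurd (by linear_combination -h') hab2
      · exact h'
    have hu10 : u 1 0 = 0 := by
      rcases mul_eq_zero.mp (show ((a:ℂ)^2 - (b:ℂ)^2) * u 1 0 = 0 by linear_combination h10)
        with h' | h'
      · exact absurd (by linear_combination h') hab2
      · exact h'
    -- row norms of u
    have hr := hu.2
    have hr00 := congrFun (congrFun hr 0) 0
    have hr11 := congrFun (congrFun hr 1) 1
    simp [mul_apply, Fin.sum_univ_two, Matrix.star_eq_conjTranspose, conjTranspose_apply,
      hu01, hu10] at hr00 hr11
    have hu00ne : u 0 0 ≠ 0 := by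
      intro h'; rw [h'] at hr00; simp at hr00
    have hu11ne : u 1 1 ≠ 0 := by
      intro h'; rw [h'] at hr11; simp at hr11
    have hane : (a:ℂ) ≠ 0 := by exact_mod_cast ha.ne'
    have hbne : (b:ℂ) ≠ 0 := by exact_mod_cast hb.ne'
    have hv10 : v 1 0 = 0 := by
      have : u 0 0 * v 1 0 * a = 0 := by linear_combination E01 - v 1 1 * b * hu01
      rcases mul_eq_zero.mp this with h' | h'
      · rcases mul_eq_zero.mp h' with h'' | h''
        · exact absurd h'' hu00ne
        · exact h''
      · exact absurd h' hane
    have hv01 : v 0 1 = 0 := by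
      have : u 1 1 * v 0 1 * b = 0 := by linear_combination E10 - v 0 0 * a * hu10
      rcases mul_eq_zero.mp this with h' | h'
      · rcases mul_eq_zero.mp h' with h'' | h''
        · exact absurd h'' hu11ne
        · exact h''
      · exact absurd h' hbne
    have key00 : u 0 0 * v 0 0 = Complex.exp (θ * Complex.I) := by
      have : (u 0 0 * v 0 0) * a = Complex.exp (θ * Complex.I) * a := by
        linear_combination E00 - v 0 1 * b * hu01
      exact mul_right_cancel₀ hane this
    have key11 : u 1 1 * v 1 1 = Complex.exp (θ * Complex.I) := by
      have : (u 1 1 * v 1 1) * b = Complex.exp (θ * Complex.I) * b := by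
        linear_combination E11 - v 1 0 * a * hu10
      exact mul_right_cancel₀ hbne this
    -- u 0 0 and u 1 1 are unit complex numbers
    have habs00 : u 0 0 = Complex.exp ((u 0 0).arg * Complex.I) := by
      have hn : ‖u 0 0‖ = 1 := by
        have : ((Complex.normSq (u 0 0) : ℝ) : ℂ) = 1 := by
          rw [← Complex.mul_conj]; linear_combination hr00
        have h' : Complex.normSq (u 0 0) = 1 := by exact_mod_cast this
        rw [Complex.norm_def, h', Real.sqrt_one]
      conv_lhs => rw [← Complex.norm_mul_exp_arg_mul_I (u 0 0)]
      rw [hn, Complex.ofReal_one, one_mul]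
    have habs11 : u 1 1 = Complex.exp ((u 1 1).arg * Complex.I) := by
      have hn : ‖u 1 1‖ = 1 := by
        have : ((Complex.normSq (u 1 1) : ℝ) : ℂ) = 1 := by
          rw [← Complex.mul_conj]; linear_combination hr11
        have h' : Complex.normSq (u 1 1) = 1 := by exact_mod_cast this
        rw [Complex.norm_def, h', Real.sqrt_one]
      conv_lhs => rw [← Complex.norm_mul_exp_arg_mul_I (u 1 1)]
      rw [hn, Complex.ofReal_one, one_mul]
    refine ⟨0, θ, (u 0 0).arg, (u 1 1).arg, ?_, ?_, by norm_num⟩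
    · ext i j
      fin_cases i <;> fin_cases j <;>
        simp [phaseDiag, hu01, hu10]
      · exact habs00
      · exact habs11
    · have hv00 : v 0 0 = Complex.exp (θ * Complex.I) * Complex.exp (-(↑(u 0 0).arg * Complex.I)) := by
        apply mul_left_cancel₀ hu00ne
        rw [key00]
        nth_rewrite 1 [habs00]
        rw [← Complex.exp_add, ← Complex.exp_add]
        congr 1
        ring
      have hv11 : v 1 1 = Complex.exp (θ * Complex.I) * Complex.exp (-(↑(u 1 1).arg * Complex.I)) := by
        apply mul_left_cancel₀ hu11ne
        rw [key11]
        nth_rewrite 1 [habs11]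
        rw [← Complex.exp_add, ← Complex.exp_add]
        congr 1
        ring
      ext i j
      fin_cases i <;> fin_cases j <;>
        simp [phaseDiag, hv01, hv10]
      · exact hv00
      · exact hv11
  · rintro ⟨θ₁, θ₂, α₁, α₂, hu', hv', hθ⟩
    subst hu' hv'
    funext p
    obtain ⟨i, j⟩ := p
    have key : ∀ α : ℝ, Complex.exp (θ₁ * Complex.I) * Complex.exp (α * Complex.I) *
        (Complex.exp (θ₂ * Complex.I) * Complex.exp (-(↑α * Complex.I))) =
        Complex.exp (θ * Complex.I) := by
      intro α
      rw [← hθ, ← Complex.exp_add, ← Complex.exp_add, ← Complex.exp_add]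
      congr 1
      push_cast
      ring
    fin_cases i <;> fin_cases j <;>
      simp [mulVec, dotProduct, Fintype.sum_prod_type, Fin.sum_univ_two, twoQubitState,
        kroneckerMap, phaseDiag, Prod.ext_iff]
    · exact Or.inl (key α₁)
    · exact Or.inl (key α₂)
end
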